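/- Let G=(V,E) be a finite simple connected graph with unit shortest-path distance d and let 0 < p < |V|. Then G has a dominating set of size at most p if and only if there exists V' ⊆ V with |V'| = p and £C(V') + £M(V') ≤ |V| − p + 1. -/
import Mathlib


open Finset

/-- Distance from a vertex to a finite set of vertices (shortest-path graph distance). -/
noncomputable def distToSet {V : Type*} (G : SimpleGraph V) (v : V) (Z : Finset V) : ℕ :=
  sInf ((fun z => G.dist v z) '' ↑Z)

lemma distToSet_le {V : Type*} (G : SimpleGraph V) (v : V) {Z : Finset V} {z : V}
    (hz : z ∈ Z) : distToSet G v Z ≤ G.dist v z :=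
  Nat.sInf_le ⟨z, by simpa using hz, rfl⟩

lemma distToSet_exists {V : Type*} (G : SimpleGraph V) (v : V) {Z : Finset V}
    (hZ : Z.Nonempty) : ∃ z ∈ Z, distToSet G v Z = G.dist v z := by
  have hne : ((fun z => G.dist v z) '' ↑Z).Nonempty := by
    obtain ⟨z, hz⟩ := hZ; exact ⟨G.dist v z, z, by simpa using hz, rfl⟩
  obtain ⟨z, hz, hd⟩ := Nat.sInf_mem hne
  exact ⟨z, by simpa using hz, hd.symm⟩

theorem stmt2 {V : Type*} [Fintype V] [DecidableEq V] [Nonempty V]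
    (G : SimpleGraph V) (hconn : G.Connected)
    (p : ℕ) (hp : 0 < p) (hpV : p < Fintype.card V) :
    (∃ Z : Finset V, Z.Nonempty ∧ Z.card ≤ p ∧ ∀ v : V, v ∉ Z → ∃ z ∈ Z, G.Adj v z) ↔
    (∃ V' : Finset V, V'.card = p ∧
      Finset.univ.sup (fun v => distToSet G v V') +
        ∑ v : V, distToSet G v V' ≤ Fintype.card V - p + 1) := by
  constructor
  · rintro ⟨Z, hZne, hZcard, hdom⟩
    obtain ⟨V', hZV', -, hVcard⟩ := Finset.exists_subsuperset_card_eq (Finset.subset_univ Z)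
      hZcard (by simpa using hpV.le)
    refine ⟨V', hVcard, ?_⟩
    have hV'ne : V'.Nonempty := hZne.mono hZV'
    have hle1 : ∀ v : V, distToSet G v V' ≤ 1 := by
      intro v
      by_cases hv : v ∈ Z
      · calc distToSet G v V' ≤ G.dist v v := distToSet_le G v (hZV' hv)
          _ = 0 := SimpleGraph.dist_self
          _ ≤ 1 := zero_le_one
      · obtain ⟨z, hz, hadj⟩ := hdom v hv
        calc distToSet G v V' ≤ G.dist v z := distToSet_le G v (hZV' hz)
          _ = 1 := SimpleGraph.dist_eq_one_iff_adj.mpr hadj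
    have hzero : ∀ v ∈ V', distToSet G v V' = 0 := by
      intro v hv
      have := distToSet_le G v hv
      simpa [SimpleGraph.dist_self] using this
    have hsup : Finset.univ.sup (fun v => distToSet G v V') ≤ 1 :=
      Finset.sup_le fun v _ => hle1 v
    have hsplit := Finset.sum_add_sum_compl V' (fun v => distToSet G v V')
    have h1 : ∑ v ∈ V', distToSet G v V' = 0 := Finset.sum_eq_zero hzero
    have h2 : ∑ v ∈ V'ᶜ, distToSet G v V' ≤ V'ᶜ.card := by
      calc ∑ v ∈ V'ᶜ, distToSet G v V' ≤ ∑ _v ∈ V'ᶜ, 1 :=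
            Finset.sum_le_sum fun v _ => hle1 v
        _ = V'ᶜ.card := by simp
    have hcc : V'ᶜ.card = Fintype.card V - p := by
      rw [Finset.card_compl, hVcard]
    omega
  · rintro ⟨V', hVcard, hbound⟩
    have hV'ne : V'.Nonempty := Finset.card_pos.mp (hVcard ▸ hp)
    refine ⟨V', hV'ne, hVcard.le, ?_⟩
    intro v hv
    by_contra h
    push_neg at h
    -- each vertex outside V' has distToSet ≥ 1
    have hge1 : ∀ u : V, u ∉ V' → 1 ≤ distToSet G u V' := by
      intro u hu
      obtain ⟨z, hz, heq⟩ := distToSet_exists G u hV'ne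
      rw [heq]
      exact (hconn u z).pos_dist_of_ne (fun h' => hu (h' ▸ hz))
    -- the bad vertex has distToSet ≥ 2
    have hm2 : 2 ≤ distToSet G v V' := by
      obtain ⟨z, hz, heq⟩ := distToSet_exists G v hV'ne
      rw [heq]
      have hne : v ≠ z := fun h' => hv (h' ▸ hz)
      have hpos := (hconn v z).pos_dist_of_ne hne
      have h1 : G.dist v z ≠ 1 := fun h' =>
        h z hz (SimpleGraph.dist_eq_one_iff_adj.mp h')
      omega
    have hsup : distToSet G v V' ≤ Finset.univ.sup (fun v => distToSet G v V') :=
      Finset.le_sup (f := fun v => distToSet G v V') (Finset.mem_univ v)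
    have hvS : v ∈ V'ᶜ := Finset.mem_compl.mpr hv
    have hsum1 : ∑ u ∈ V'ᶜ, distToSet G u V' ≤ ∑ u : V, distToSet G u V' :=
      Finset.sum_le_sum_of_subset (Finset.subset_univ _)
    have hsum2 : distToSet G v V' + ∑ u ∈ V'ᶜ.erase v, distToSet G u V'
        = ∑ u ∈ V'ᶜ, distToSet G u V' := Finset.add_sum_erase _ (fun u => distToSet G u V') hvS
    have hsum3 : (V'ᶜ.erase v).card ≤ ∑ u ∈ V'ᶜ.erase v, distToSet G u V' := by
      calc (V'ᶜ.erase v).card = ∑ _u ∈ V'ᶜ.erase v, 1 := by simp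
        _ ≤ ∑ u ∈ V'ᶜ.erase v, distToSet G u V' :=
            Finset.sum_le_sum fun u hu => hge1 u (Finset.mem_compl.mp (Finset.mem_of_mem_erase hu))
    have hcard : (V'ᶜ.erase v).card = Fintype.card V - p - 1 := by
      rw [Finset.card_erase_of_mem hvS, Finset.card_compl, hVcard]
    omega
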